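/- Let 1 ≤ p < ∞ and define the sequence x = (x_k)_{k∈ℤ} by x_k = |k|^{−1/p} for k ≠ 0 and x_0 = 1. Then x is not p-summable, but for every m ∈ ℤ, N ∈ ℕ, and γ > 0, one has γ · |{k ∈ S_{m,N} : |x_k| > γ}|^{1/p} ≤ 3; in particular ‖x‖_{wℓ^p_p} ≤ 3, so x belongs to the weak type discrete Morrey space wℓ^p_p, and the inclusion ℓ^p ⊆ wℓ^p_p is strict. -/

import Mathlib

open scoped ENNReal NNReal BigOperators

/-- The discrete "ball" `S_{m,N} = {m-N, …, m+N}` as a finite set of integers. -/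
noncomputable def S (m : ℤ) (N : ℕ) : Finset ℤ := Finset.Icc (m - N) (m + N)

open Classical in
/-- The cardinality of `{k ∈ S_{m,N} : |x_k| > γ}`. -/
noncomputable def weakCard (x : ℤ → ℂ) (m : ℤ) (N : ℕ) (γ : ℝ≥0) : ℕ :=
  ((S m N).filter (fun k => γ < ‖x k‖₊)).card

/-- The weak type discrete Morrey norm `‖x‖_{wℓ^p_q}`. -/
noncomputable def wMorreyNorm (p q : ℝ) (x : ℤ → ℂ) : ℝ≥0∞ :=
  ⨆ (m : ℤ) (N : ℕ) (γ : ℝ≥0) (_ : 0 < γ),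
    (2 * (N : ℝ≥0∞) + 1) ^ (1 / q - 1 / p) * (γ : ℝ≥0∞) *
      (weakCard x m N γ : ℝ≥0∞) ^ (1 / p)

theorem stmt6 (p : ℝ) (hp : 1 ≤ p) (x : ℤ → ℂ)
    (hx : ∀ k : ℤ, x k = if k = 0 then 1 else ((|(k : ℝ)| ^ (-(1 / p)) : ℝ) : ℂ)) :
    (¬ Summable fun k : ℤ => ‖x k‖ ^ p) ∧
    (∀ (m : ℤ) (N : ℕ) (γ : ℝ≥0), 0 < γ →
      (γ : ℝ) * (weakCard x m N γ : ℝ) ^ (1 / p) ≤ 3) ∧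
    wMorreyNorm p p x ≤ 3 := by
  have hp0 : 0 < p := lt_of_lt_of_le one_pos hp
  have hnorm : ∀ k : ℤ, k ≠ 0 → ‖x k‖ = |(k : ℝ)| ^ (-(1 / p)) := by
    intro k hk
    rw [hx k, if_neg hk, Complex.norm_real, Real.norm_eq_abs,
      abs_of_nonneg (Real.rpow_nonneg (abs_nonneg _) _)]
  have hnorm0 : ‖x 0‖ = 1 := by rw [hx 0]; simp
  have key : ∀ (m : ℤ) (N : ℕ) (γ : ℝ≥0), 0 < γ →
      (γ : ℝ) * (weakCard x m N γ : ℝ) ^ (1 / p) ≤ 3 := by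
    intro m N γ hγ
    have hγ0 : (0:ℝ) < (γ:ℝ) := hγ
    rcases le_or_gt 1 γ with h1 | h1
    · have hz : weakCard x m N γ = 0 := by
        rw [weakCard, Finset.card_eq_zero, Finset.filter_eq_empty_iff]
        intro k _
        simp only [not_lt]
        have hk1 : ‖x k‖ ≤ 1 := by
          rcases eq_or_ne k 0 with rfl | hk
          · rw [hnorm0]
          · rw [hnorm k hk]
            apply Real.rpow_le_one_of_one_le_of_nonpos
            · have : (1:ℤ) ≤ |k| := Int.one_le_abs hk
              calc (1:ℝ) ≤ ((|k| : ℤ) : ℝ) := by exact_mod_cast this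
                _ = |(k:ℝ)| := by push_cast; ring
            · have : (0:ℝ) < 1 / p := by positivity
              linarith
        calc ‖x k‖₊ ≤ 1 := by rwa [← NNReal.coe_le_coe, coe_nnnorm, NNReal.coe_one]
          _ ≤ γ := h1
      rw [hz]
      simp only [Nat.cast_zero]
      rw [Real.zero_rpow (by positivity : 1 / p ≠ 0), mul_zero]
      norm_num
    · set r : ℝ := (γ : ℝ) ^ (-p) with hr
      have hr1 : 1 < r := by
        rw [hr]
        exact (Real.one_lt_rpow_iff_of_pos hγ0).mpr (Or.inr ⟨h1, by linarith⟩)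
      set M : ℕ := ⌊r⌋₊ with hM
      have hsub : ((S m N).filter (fun k => γ < ‖x k‖₊)) ⊆
          Finset.Icc (-(M:ℤ)) (M:ℤ) := by
        intro k hk
        rw [Finset.mem_filter] at hk
        have hk2 : (γ : ℝ) < ‖x k‖ := hk.2
        have habs : (k.natAbs : ℝ) < r := by
          rcases eq_or_ne k 0 with rfl | h0
          · simpa using hr1.trans_le' (by norm_num)
          · rw [hnorm k h0] at hk2
            have := Real.rpow_lt_rpow_of_neg hγ0 hk2 (by linarith : -p < 0)
            rw [← Real.rpow_mul (abs_nonneg _), neg_mul_neg, one_div_mul_cancel hp0.ne',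
              Real.rpow_one] at this
            calc (k.natAbs : ℝ) = |(k:ℝ)| := by
                  simp [Nat.cast_natAbs]
              _ < r := this
        have hle : k.natAbs ≤ M := Nat.le_floor habs.le
        rw [Finset.mem_Icc]
        constructor <;> omega
      have hcard : (weakCard x m N γ : ℝ) ≤ 2 * (M:ℝ) + 1 := by
        have := Finset.card_le_card hsub
        rw [Int.card_Icc] at this
        have h2 : ((M:ℤ) + 1 - -(M:ℤ)).toNat = 2 * M + 1 := by omega
        rw [h2] at this
        rw [weakCard]
        exact_mod_cast this.trans (le_refl _)
      have hMr : (M:ℝ) ≤ r := Nat.floor_le (by linarith)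
      have hcard3 : (weakCard x m N γ : ℝ) ≤ 3 * r := by linarith
      have h1p : (0:ℝ) < 1 / p := by positivity
      calc (γ : ℝ) * (weakCard x m N γ : ℝ) ^ (1 / p)
          ≤ (γ : ℝ) * (3 * r) ^ (1 / p) :=
            mul_le_mul_of_nonneg_left
              (Real.rpow_le_rpow (Nat.cast_nonneg _) hcard3 h1p.le) hγ0.le
        _ = (γ : ℝ) * ((3:ℝ) ^ (1 / p) * r ^ (1 / p)) := by
            rw [Real.mul_rpow (by norm_num) (by linarith)]
        _ = (3:ℝ) ^ (1 / p) * ((γ:ℝ) * r ^ (1 / p)) := by ring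
        _ = (3:ℝ) ^ (1 / p) := by
            rw [hr, ← Real.rpow_mul hγ0.le, neg_mul, mul_one_div, div_self hp0.ne',
              Real.rpow_neg_one, mul_inv_cancel₀ hγ0.ne', mul_one]
        _ ≤ (3:ℝ) ^ (1:ℝ) := Real.rpow_le_rpow_of_exponent_le (by norm_num)
            (by rw [div_le_one hp0]; exact hp)
        _ = 3 := Real.rpow_one 3
  refine ⟨?_, key, ?_⟩
  · intro hs
    have h1 : Summable fun n : ℕ => ‖x ((n:ℤ) + 1)‖ ^ p := by
      have hinj : Function.Injective (fun n : ℕ => (n:ℤ) + 1) := by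
        intro a b h; simpa using h
      exact hs.comp_injective hinj
    have h2 : (fun n : ℕ => ‖x ((n:ℤ) + 1)‖ ^ p) = fun n : ℕ => ((n:ℝ) + 1)⁻¹ := by
      funext n
      have h0 : ((n:ℤ) + 1) ≠ 0 := by omega
      rw [hnorm _ h0]
      have habs : |(((n:ℤ) + 1 : ℤ) : ℝ)| = (n:ℝ) + 1 := by
        push_cast; rw [abs_of_nonneg (by positivity)]
      rw [habs, ← Real.rpow_mul (by positivity), neg_mul,
        one_div_mul_cancel hp0.ne', Real.rpow_neg_one]
    rw [h2] at h1
    have h3 : Summable fun n : ℕ => ((n:ℝ))⁻¹ := by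
      refine (summable_nat_add_iff 1).mp ?_
      convert h1 using 2 with n
      · rfl
      push_cast
      ring
    exact Real.not_summable_natCast_inv h3
  · rw [wMorreyNorm]
    refine iSup_le fun m => iSup_le fun N => iSup_le fun γ => iSup_le fun hγ => ?_
    rw [sub_self, ENNReal.rpow_zero, one_mul]
    have hreal := key m N γ hγ
    have hc : ((weakCard x m N γ : ℕ) : ℝ≥0∞) = (((weakCard x m N γ : ℕ) : ℝ≥0) : ℝ≥0∞) := by
      simp
    rw [hc, ← ENNReal.coe_rpow_of_nonneg _ (by positivity : (0:ℝ) ≤ 1/p),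
      ← ENNReal.coe_mul]
    have h3 : (3 : ℝ≥0∞) = ((3 : ℝ≥0) : ℝ≥0∞) := by norm_num
    rw [h3, ENNReal.coe_le_coe, ← NNReal.coe_le_coe]
    push_cast [NNReal.coe_rpow]
    exact_mod_cast hreal
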